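/- (Artin) Every rational-valued character χ of a finite group G can be written as χ = Σ_H (a_H / [N_G(H) : H]) · (1_H)^G, where H ranges over the cyclic subgroups of G and a_H ∈ ℤ. -/

import Mathlib

/-- The induced character `(1_C)^G` of the trivial character of a subgroup `C`. -/
noncomputable def indTriv (G : Type) [Group G] [Fintype G] (C : Subgroup G) : G → ℂ :=
  fun g => (Nat.card {x : G // x⁻¹ * g * x ∈ C} : ℂ) / (Nat.card C : ℂ)

/-- `χ : G → ℂ` is a character: the trace of a nonzero finite-dimensional complex rep. -/
def IsCharacter (G : Type) [Group G] (χ : G → ℂ) : Prop :=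
  ∃ V : FDRep ℂ G, χ = V.character ∧ χ ≠ 0

/-- `χ` is an irreducible character of `G`. -/
def IsIrredChar (G : Type) [Group G] (χ : G → ℂ) : Prop :=
  ∃ V : FDRep ℂ G, CategoryTheory.Simple V ∧ χ = V.character

/-- All values of `χ` are rational. -/
def IsRatValued {G : Type} (χ : G → ℂ) : Prop := ∀ g : G, ∃ q : ℚ, χ g = (q : ℂ)

/-- Subgroups `H` and `K` are conjugate in `G`. -/
def SubConj {G : Type} [Group G] (H K : Subgroup G) : Prop :=
  ∃ g : G, Subgroup.map (MulAut.conj g).toMonoidHom H = K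

/-- The ℂ-subspace of `G → ℂ` spanned by the rational valued characters of `G`. -/
noncomputable def ratCharSpan (G : Type) [Group G] : Submodule ℂ (G → ℂ) :=
  Submodule.span ℂ {χ : G → ℂ | IsCharacter G χ ∧ IsRatValued χ}

/-- The number of conjugacy classes of cyclic subgroups of `G`. -/
noncomputable def numCyclicClasses (G : Type) [Group G] : ℕ :=
  Nat.card (Quot (fun H K : {H : Subgroup G // IsCyclic ↥H} => SubConj H.1 K.1))

/-- Indicator function of the set of `g` with `⟨g⟩` conjugate to `⟨x⟩`. -/
noncomputable def Phi (G : Type) [Group G] (x : G) : G → ℂ := fun g =>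
  letI := Classical.propDecidable
  if SubConj (Subgroup.zpowers g) (Subgroup.zpowers x) then 1 else 0

/-- The cyclotomic field `ℚ(e^{2πi/n})` as a subfield of `ℂ`. -/
noncomputable def cycField (n : ℕ) : IntermediateField ℚ ℂ :=
  IntermediateField.adjoin ℚ ({Complex.exp (2 * Real.pi * Complex.I / n)} : Set ℂ)

/-- `ψ` is in the `Gal(ℚ(ζ_n)/ℚ)`-orbit of `χ` (acting on character values). -/
def galRel (G : Type) [Group G] (n : ℕ) (χ ψ : G → ℂ) : Prop :=
  ∃ σ : cycField n ≃ₐ[ℚ] cycField n,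
    ∀ g : G, ∃ h : χ g ∈ cycField n, (σ ⟨χ g, h⟩ : ℂ) = ψ g

/-- The field `ℚ(χ)` generated by the values of `χ`. -/
noncomputable def charField (G : Type) (χ : G → ℂ) : IntermediateField ℚ ℂ :=
  IntermediateField.adjoin ℚ (Set.range χ)

/-- The rationalization `χ^rat = ∑_{σ ∈ Gal(ℚ(χ)/ℚ)} χ^σ`. -/
noncomputable def ratzn (G : Type) [Group G] (χ : G → ℂ) : G → ℂ :=
  fun g => ∑ᶠ σ : charField G χ ≃ₐ[ℚ] charField G χ,
    (σ ⟨χ g, IntermediateField.subset_adjoin ℚ _ ⟨g, rfl⟩⟩ : ℂ)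

/-- The induced character of a character `φ` of a subgroup `H`. -/
noncomputable def inducedChar (G : Type) [Group G] [Fintype G] (H : Subgroup G)
    (φ : H → ℂ) : G → ℂ := fun g =>
  letI := Classical.propDecidable
  (Nat.card H : ℂ)⁻¹ * ∑ x : G, if h : x⁻¹ * g * x ∈ H then φ ⟨x⁻¹ * g * x, h⟩ else 0


set_option maxHeartbeats 1000000
section ArtinProofs
open Module LinearMap Set Subgroup Polynomial IsCyclotomicExtension



lemma spec_end {V : Type*} [AddCommGroup V] [Module ℂ V] [FiniteDimensional ℂ V]
    (f : Module.End ℂ V) (n : ℕ) (hn : 0 < n) (hf : f ^ n = 1) :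
    ∃ (ι : Finset ℂ) (d : ℂ → ℕ), (∀ z ∈ ι, z ^ n = 1) ∧
      ∀ k : ℕ, LinearMap.trace ℂ V (f ^ k) = ∑ z ∈ ι, (d z : ℂ) * z ^ k := by
  have h_fin : {μ : ℂ | f.maxGenEigenspace μ ≠ ⊥}.Finite :=
    WellFoundedGT.finite_ne_bot_of_iSupIndep f.independent_maxGenEigenspace
  have hds : DirectSum.IsInternal (fun μ : ℂ => f.maxGenEigenspace μ) :=
    DirectSum.isInternal_submodule_of_iSupIndep_of_iSup_eq_top
      f.independent_maxGenEigenspace (Module.End.iSup_maxGenEigenspace_eq_top f)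
  refine ⟨h_fin.toFinset, fun μ => finrank ℂ (f.maxGenEigenspace μ), ?_, ?_⟩
  · intro μ hμ
    rw [Set.Finite.mem_toFinset] at hμ
    have hev : f.HasEigenvalue μ := by
      apply Module.End.hasEigenvalue_of_hasGenEigenvalue (k := finrank ℂ V)
      show f.genEigenspace μ (finrank ℂ V) ≠ ⊥
      rw [← Module.End.maxGenEigenspace_eq_genEigenspace_finrank]
      exact hμ
    obtain ⟨v, hv⟩ := hev.exists_hasEigenvector
    have h1 : (f ^ n) v = μ ^ n • v := hv.pow_apply n
    rw [hf, Module.End.one_apply] at h1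
    have h2 : ((1 : ℂ) - μ ^ n) • v = 0 := by
      rw [sub_smul, one_smul, ← h1, sub_self]
    rcases smul_eq_zero.mp h2 with h | h
    · linear_combination -h
    · exact absurd h hv.right
  · intro k
    have hm : ∀ μ : ℂ, MapsTo f ↑(f.maxGenEigenspace μ) ↑(f.maxGenEigenspace μ) :=
      fun μ => Module.End.mapsTo_maxGenEigenspace_of_comm rfl μ
    have hfk : ∀ μ : ℂ, MapsTo (f ^ k) ↑(f.maxGenEigenspace μ) ↑(f.maxGenEigenspace μ) :=
      fun μ => Module.End.mapsTo_maxGenEigenspace_of_comm (Commute.pow_right rfl k) μ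
    rw [trace_eq_sum_trace_restrict' hds h_fin hfk]
    refine Finset.sum_congr rfl fun μ _ => ?_
    have hrp : (f ^ k).restrict (hfk μ) = (f.restrict (hm μ)) ^ k := by
      exact (Module.End.pow_restrict (f' := f) k (hm μ)).symm
    rw [hrp]
    -- trace of (f.restrict) ^ k = μ ^ k * finrank
    have hnil : IsNilpotent (f.restrict (hm μ) - algebraMap ℂ _ μ) := by
      have := f.isNilpotent_restrict_maxGenEigenspace_sub_algebraMap μ
      convert this using 1
      ext x; simp [LinearMap.restrict_apply]; rfl
    have key : ∀ m : ℕ, LinearMap.trace ℂ _ ((f.restrict (hm μ)) ^ m)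
        = μ ^ m * (finrank ℂ (f.maxGenEigenspace μ) : ℂ) := by
      intro m
      induction m with
      | zero => simp [LinearMap.trace_one]
      | succ m ih =>
        rw [pow_succ, Module.End.mul_eq_comp,
          LinearMap.trace_comp_eq_mul_of_commute_of_isNilpotent μ (Commute.pow_left rfl m) hnil,
          ih, pow_succ]
        ring
    rw [key k]
    ring


lemma gal_sum (n : ℕ+) (k : ℕ) (hk : Nat.Coprime k n) (ι : Finset ℂ) (d : ℂ → ℕ)
    (hι : ∀ z ∈ ι, z ^ (n : ℕ) = 1) (q : ℚ) (hq : ∑ z ∈ ι, (d z : ℂ) * z = (q : ℂ)) :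
    ∑ z ∈ ι, (d z : ℂ) * z ^ k = (q : ℂ) := by
  haveI : NeZero (n : ℕ) := ⟨n.pos.ne'⟩
  set K := CyclotomicField n ℚ
  haveI : IsCyclotomicExtension {(n : ℕ)} ℚ K := CyclotomicField.isCyclotomicExtension (n : ℕ) ℚ
  haveI : FiniteDimensional ℚ K := IsCyclotomicExtension.finiteDimensional {(n : ℕ)} ℚ K
  haveI : Algebra.IsAlgebraic ℚ K := Algebra.IsAlgebraic.of_finite ℚ K
  let φ : K →ₐ[ℚ] ℂ := IsAlgClosed.lift
  have hinj : Function.Injective φ := φ.toRingHom.injective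
  let ζK : K := IsCyclotomicExtension.zeta n ℚ K
  have hζK : IsPrimitiveRoot ζK n := IsCyclotomicExtension.zeta_spec n ℚ K
  have hζ : IsPrimitiveRoot (φ ζK) n := hζK.map_of_injective hinj
  have hirr : Irreducible (cyclotomic n ℚ) := cyclotomic.irreducible_rat n.pos
  have hμ : IsPrimitiveRoot (ζK ^ k) n := hζK.pow_of_coprime k hk
  let σ : K ≃ₐ[ℚ] K := IsCyclotomicExtension.fromZetaAut hμ hirr
  have hσ : σ ζK = ζK ^ k := IsCyclotomicExtension.fromZetaAut_spec hμ hirr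
  haveI : NeZero (n : ℕ) := ⟨n.pos.ne'⟩
  -- choose exponents
  have hex : ∀ z ∈ ι, ∃ i : ℕ, (φ ζK) ^ i = z := by
    intro z hz
    obtain ⟨i, _, hi⟩ := hζ.eq_pow_of_pow_eq_one (hι z hz)
    exact ⟨i, hi⟩
  classical
  choose j hj using hex
  let T : K := ∑ z ∈ ι.attach, (d z.1 : K) * ζK ^ (j z.1 z.2)
  have hφT : φ T = (q : ℂ) := by
    rw [← hq, map_sum, ← Finset.sum_attach ι (fun z => (d z : ℂ) * z)]
    refine Finset.sum_congr rfl fun z _ => ?_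
    rw [map_mul, map_pow, map_natCast, hj z.1 z.2]
  have hTq : T = algebraMap ℚ K q := by
    apply hinj
    rw [hφT, AlgHom.commutes]
    norm_cast
  have hσT : σ T = T := by rw [hTq, AlgEquiv.commutes]
  have hφσT : φ (σ T) = ∑ z ∈ ι, (d z : ℂ) * z ^ k := by
    rw [map_sum σ, map_sum, ← Finset.sum_attach ι (fun z => (d z : ℂ) * z ^ k)]
    refine Finset.sum_congr rfl fun z _ => ?_
    rw [map_mul σ, map_pow σ, hσ, map_natCast σ, map_mul, map_pow, map_pow, map_natCast,
      ← pow_mul, mul_comm k, pow_mul, hj z.1 z.2]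
  rw [← hφσT, hσT, hφT]

open Module LinearMap Set Subgroup


namespace ArtinAux

variable {G : Type} [Group G]

lemma subconj_refl (H : Subgroup G) : SubConj H H := by
  refine ⟨1, ?_⟩
  have : (MulAut.conj (1:G)).toMonoidHom = MonoidHom.id G := by
    ext x; simp
  rw [this, Subgroup.map_id]

lemma map_conj_conj (y z : G) (H : Subgroup G) :
    Subgroup.map (MulAut.conj y).toMonoidHom (Subgroup.map (MulAut.conj z).toMonoidHom H)
      = Subgroup.map (MulAut.conj (y * z)).toMonoidHom H := by
  rw [Subgroup.map_map]
  congr 1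
  ext x
  simp [mul_assoc]

lemma subconj_symm {H K : Subgroup G} (h : SubConj H K) : SubConj K H := by
  obtain ⟨y, hy⟩ := h
  refine ⟨y⁻¹, ?_⟩
  rw [← hy, map_conj_conj, inv_mul_cancel]
  have : (MulAut.conj (1:G)).toMonoidHom = MonoidHom.id G := by ext x; simp
  rw [this, Subgroup.map_id]

lemma subconj_trans {H K L : Subgroup G} (h1 : SubConj H K) (h2 : SubConj K L) :
    SubConj H L := by
  obtain ⟨y, hy⟩ := h1
  obtain ⟨z, hz⟩ := h2
  exact ⟨z * y, by rw [← hz, ← hy, map_conj_conj]⟩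

lemma subconj_card {H K : Subgroup G} (h : SubConj H K) : Nat.card H = Nat.card K := by
  obtain ⟨y, hy⟩ := h
  rw [← hy]
  exact Nat.card_congr (Subgroup.equivMapOfInjective H _ (MulAut.conj y).injective).toEquiv

lemma subconj_isCyclic {H K : Subgroup G} (h : SubConj H K) (hc : IsCyclic H) : IsCyclic K := by
  obtain ⟨y, hy⟩ := h
  rw [← hy]
  exact isCyclic_of_surjective _ (Subgroup.equivMapOfInjective H _ (MulAut.conj y).injective).surjective

lemma zpowers_conj (x g : G) :
    Subgroup.map (MulAut.conj x).toMonoidHom (Subgroup.zpowers g) = Subgroup.zpowers (x * g * x⁻¹) := by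
  rw [MonoidHom.map_zpowers]
  rfl

lemma subconj_zpowers_conj (x g : G) :
    SubConj (Subgroup.zpowers g) (Subgroup.zpowers (x * g * x⁻¹)) :=
  ⟨x, zpowers_conj x g⟩

/-- The chosen representative of the conjugacy class. -/
noncomputable def crep (H : Subgroup G) : Subgroup G :=
  (@Quotient.mk _ ⟨SubConj, subconj_refl, subconj_symm, subconj_trans⟩ H).out

lemma crep_subconj (H : Subgroup G) : SubConj (crep H) H :=
  @Quotient.mk_out _ ⟨SubConj, subconj_refl, subconj_symm, subconj_trans⟩ H

lemma crep_eq_of_subconj {H K : Subgroup G} (h : SubConj H K) : crep H = crep K := by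
  unfold crep
  congr 1
  exact Quotient.sound h

lemma crep_crep (H : Subgroup G) : crep (crep H) = crep H :=
  crep_eq_of_subconj (crep_subconj H)

/-- chosen generator of a cyclic subgroup -/
noncomputable def genOf (H : Subgroup G) : G :=
  letI := Classical.propDecidable
  if h : IsCyclic H then (((@IsCyclic.exists_generator H _ h)).choose : H) else 1

lemma zpowers_genOf {H : Subgroup G} (h : IsCyclic H) : Subgroup.zpowers (genOf H) = H := by
  rw [genOf, dif_pos h]
  apply le_antisymm
  · exact Subgroup.zpowers_le.mpr ((@IsCyclic.exists_generator H _ h).choose : H).2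
  · intro x hx
    obtain ⟨m, hm⟩ := (@IsCyclic.exists_generator H _ h).choose_spec ⟨x, hx⟩
    exact ⟨m, by simpa [← SubgroupClass.coe_zpow] using congrArg (Subtype.val) hm⟩

end ArtinAux

namespace ArtinAux2

open ArtinAux

variable {G : Type} [Group G] [Fintype G]

/-- number of x with x⁻¹ g x ∈ H -/
noncomputable def cnt (H : Subgroup G) (g : G) : ℕ := Nat.card {x : G // x⁻¹ * g * x ∈ H}

/-- the same count divided by the normalizer order -/
noncomputable def psi (H : Subgroup G) (g : G) : ℕ :=
  Nat.card {q : G ⧸ (Subgroup.normalizer (H : Set G)) // (Quotient.out q)⁻¹ * g * (Quotient.out q) ∈ H}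

lemma conj_mem_of_mem_normalizer {H : Subgroup G} {w a : G}
    (hw : w ∈ (Subgroup.normalizer (H : Set G))) (ha : a ∈ H) : w⁻¹ * a * w ∈ H :=
  (Subgroup.mem_normalizer_iff''.mp hw a).mp ha

lemma conj_mem_iff_of_mem_normalizer {H : Subgroup G} {w : G} (hw : w ∈ (Subgroup.normalizer (H : Set G))) (a : G) :
    w⁻¹ * a * w ∈ H ↔ a ∈ H :=
  (Subgroup.mem_normalizer_iff''.mp hw a).symm

lemma cnt_eq_psi_mul (H : Subgroup G) (g : G) :
    cnt H g = psi H g * Nat.card (Subgroup.normalizer (H : Set G)) := by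
  classical
  set N := (Subgroup.normalizer (H : Set G)) with hN
  have e : ({q : G ⧸ N // (Quotient.out q)⁻¹ * g * (Quotient.out q) ∈ H} × N)
      ≃ {x : G // x⁻¹ * g * x ∈ H} := by
    refine Equiv.ofBijective (fun p => ⟨(Quotient.out p.1.1) * p.2.1, ?_⟩) ⟨?_, ?_⟩
    · have hw := p.2.2
      have := conj_mem_of_mem_normalizer hw p.1.2
      rw [show ((Quotient.out p.1.1) * p.2.1)⁻¹ * g * ((Quotient.out p.1.1) * p.2.1)
          = p.2.1⁻¹ * ((Quotient.out p.1.1)⁻¹ * g * (Quotient.out p.1.1)) * p.2.1 by group]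
      exact this
    · rintro ⟨⟨q, hq⟩, w⟩ ⟨⟨q', hq'⟩, w'⟩ hEq
      simp only [Subtype.mk_eq_mk] at hEq
      have h1 : q = q' := by
        have := congrArg (QuotientGroup.mk (s := N)) hEq
        rwa [QuotientGroup.mk_mul_of_mem _ w.2, QuotientGroup.mk_mul_of_mem _ w'.2,
          QuotientGroup.out_eq', QuotientGroup.out_eq'] at this
      subst h1
      have h2 : w = w' := Subtype.ext (mul_left_cancel hEq)
      subst h2
      rfl
    · rintro ⟨x, hx⟩
      set q : G ⧸ N := QuotientGroup.mk x with hq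
      have hout : (QuotientGroup.mk (Quotient.out q) : G ⧸ N) = QuotientGroup.mk x := by
        rw [QuotientGroup.out_eq']
      have hmem2 : (Quotient.out q)⁻¹ * x ∈ N := (QuotientGroup.eq (s := N)).mp hout
      have hq2 : (Quotient.out q)⁻¹ * g * (Quotient.out q) ∈ H := by
        have hw : x⁻¹ * (Quotient.out q) ∈ N := by
          have := N.inv_mem hmem2
          rwa [mul_inv_rev, inv_inv] at this
        have := conj_mem_of_mem_normalizer hw hx
        rwa [show (x⁻¹ * Quotient.out q)⁻¹ * (x⁻¹ * g * x) * (x⁻¹ * Quotient.out q)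
            = (Quotient.out q)⁻¹ * g * (Quotient.out q) by group] at this
      refine ⟨⟨⟨q, hq2⟩, ⟨(Quotient.out q)⁻¹ * x, hmem2⟩⟩, ?_⟩
      simp [mul_assoc]
  rw [cnt, ← Nat.card_congr e, Nat.card_prod, psi]

lemma cnt_conj (H : Subgroup G) (y g : G) : cnt H (y * g * y⁻¹) = cnt H g := by
  apply Nat.card_congr
  refine Equiv.subtypeEquiv (Equiv.mulLeft y⁻¹) (fun x => ?_)
  simp only [Equiv.coe_mulLeft]
  constructor
  · intro hx
    rwa [show (y⁻¹ * x)⁻¹ * g * (y⁻¹ * x) = x⁻¹ * (y * g * y⁻¹) * x by group]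
  · intro hx
    rwa [show (y⁻¹ * x)⁻¹ * g * (y⁻¹ * x) = x⁻¹ * (y * g * y⁻¹) * x by group] at hx

lemma mem_iff_zpowers_conj_le (H : Subgroup G) (g x : G) :
    x⁻¹ * g * x ∈ H ↔ Subgroup.map (MulAut.conj x⁻¹).toMonoidHom (Subgroup.zpowers g) ≤ H := by
  rw [MonoidHom.map_zpowers]
  have : (MulAut.conj x⁻¹).toMonoidHom g = x⁻¹ * g * x := by
    simp [MulAut.conj_apply]
  rw [this, Subgroup.zpowers_le]

lemma cnt_zpowers_eq (H : Subgroup G) {g g' : G}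
    (hz : Subgroup.zpowers g = Subgroup.zpowers g') : cnt H g = cnt H g' := by
  apply Nat.card_congr
  refine Equiv.subtypeEquivRight (fun x => ?_)
  rw [mem_iff_zpowers_conj_le, mem_iff_zpowers_conj_le, hz]

lemma cnt_subconj (H : Subgroup G) {g g' : G}
    (hc : SubConj (Subgroup.zpowers g) (Subgroup.zpowers g')) : cnt H g = cnt H g' := by
  obtain ⟨y, hy⟩ := hc
  rw [zpowers_conj] at hy
  rw [← cnt_conj H y g]
  exact cnt_zpowers_eq H hy

lemma sub_eq_of_le_of_card_le {H K : Subgroup G} (hle : H ≤ K)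
    (hcard : Nat.card K ≤ Nat.card H) : H = K := by
  apply SetLike.coe_injective
  exact Set.eq_of_subset_of_ncard_le hle
    (by rwa [← Nat.card_coe_set_eq, ← Nat.card_coe_set_eq]) (K : Set G).toFinite

lemma exists_conj_eq_of_cnt {H : Subgroup G} {g : G} (hc : cnt H g ≠ 0) :
    ∃ x : G, Subgroup.map (MulAut.conj x⁻¹).toMonoidHom (Subgroup.zpowers g) ≤ H := by
  have : Nonempty {x : G // x⁻¹ * g * x ∈ H} := by
    by_contra h
    refine hc ?_
    rw [cnt]
    exact Nat.card_eq_zero.mpr (Or.inl (not_nonempty_iff.mp h))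
  obtain ⟨x, hx⟩ := this
  exact ⟨x, (mem_iff_zpowers_conj_le H g x).mp hx⟩

lemma card_le_of_cnt_ne_zero {H : Subgroup G} {g : G} (hc : cnt H g ≠ 0) :
    Nat.card (Subgroup.zpowers g) ≤ Nat.card H := by
  obtain ⟨x, hx⟩ := exists_conj_eq_of_cnt hc
  have h1 := subconj_card (⟨x⁻¹, rfl⟩ : SubConj (Subgroup.zpowers g)
    (Subgroup.map (MulAut.conj x⁻¹).toMonoidHom (Subgroup.zpowers g)))
  rw [h1]
  exact Subgroup.card_le_of_le hx

lemma subconj_of_cnt_ne_zero_card_eq {H : Subgroup G} {g : G} (hc : cnt H g ≠ 0)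
    (hcard : Nat.card (Subgroup.zpowers g) = Nat.card H) :
    SubConj (Subgroup.zpowers g) H := by
  obtain ⟨x, hx⟩ := exists_conj_eq_of_cnt hc
  have h1 := subconj_card (⟨x⁻¹, rfl⟩ : SubConj (Subgroup.zpowers g)
    (Subgroup.map (MulAut.conj x⁻¹).toMonoidHom (Subgroup.zpowers g)))
  refine ⟨x⁻¹, sub_eq_of_le_of_card_le hx ?_⟩
  rw [← h1, hcard]

lemma cnt_diag {H : Subgroup G} {g : G} (hgen : Subgroup.zpowers g = H) :
    cnt H g = Nat.card (Subgroup.normalizer (H : Set G)) := by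
  have key : ∀ x : G, (x⁻¹ * g * x ∈ H) ↔ x ∈ (Subgroup.normalizer (H : Set G)) := by
    intro x
    constructor
    · intro hx
      have hle := (mem_iff_zpowers_conj_le H g x).mp hx
      have h1 := subconj_card (⟨x⁻¹, rfl⟩ : SubConj (Subgroup.zpowers g)
        (Subgroup.map (MulAut.conj x⁻¹).toMonoidHom (Subgroup.zpowers g)))
      have heq : Subgroup.map (MulAut.conj x⁻¹).toMonoidHom (Subgroup.zpowers g) = H := by
        apply sub_eq_of_le_of_card_le hle
        rw [← h1, hgen]
      rw [hgen] at heq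
      rw [Subgroup.mem_normalizer_iff'']
      intro a
      constructor
      · intro ha
        rw [← heq]
        exact ⟨a, ha, by simp [MulAut.conj_apply]⟩
      · intro ha
        rw [← heq] at ha
        obtain ⟨b, hb, hba⟩ := ha
        have : b = a := by
          have := hba
          simp only [MulEquiv.coe_toMonoidHom, MulAut.conj_apply, inv_inv] at this
          -- this : x⁻¹ * b * x = x⁻¹ * a * x
          have h2 : b = x * (x⁻¹ * a * x) * x⁻¹ := by
            rw [← this]; group
          rw [h2]; group
        rwa [← this]
    · intro hx
      have hg : g ∈ H := hgen ▸ Subgroup.mem_zpowers g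
      exact (conj_mem_iff_of_mem_normalizer hx g).mpr hg
  rw [cnt]
  exact Nat.card_congr (Equiv.subtypeEquivRight key)

lemma card_normalizer_pos (H : Subgroup G) : 0 < Nat.card (Subgroup.normalizer (H : Set G)) :=
  Nat.card_pos

lemma psi_diag {H : Subgroup G} {g : G} (hgen : Subgroup.zpowers g = H) : psi H g = 1 := by
  have h1 := cnt_eq_psi_mul H g
  rw [cnt_diag hgen] at h1
  have := card_normalizer_pos H
  nlinarith [h1, this]

lemma psi_subconj (H : Subgroup G) {g g' : G}
    (hc : SubConj (Subgroup.zpowers g) (Subgroup.zpowers g')) : psi H g = psi H g' := by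
  have h1 := cnt_eq_psi_mul H g
  have h2 := cnt_eq_psi_mul H g'
  rw [cnt_subconj H hc] at h1
  have := card_normalizer_pos H
  exact Nat.eq_of_mul_eq_mul_right this (h1.symm.trans h2)

lemma psi_ne_zero_imp {H : Subgroup G} {g : G} (h : psi H g ≠ 0) : cnt H g ≠ 0 := by
  rw [cnt_eq_psi_mul H g]
  have := card_normalizer_pos H
  positivity

lemma relIndex_mul_card (H : Subgroup G) :
    H.relIndex (Subgroup.normalizer (H : Set G)) * Nat.card H = Nat.card (Subgroup.normalizer (H : Set G)) := by
  have h1 : Nat.card (H.subgroupOf (Subgroup.normalizer (H : Set G))) = Nat.card H :=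
    Nat.card_congr (Subgroup.subgroupOfEquivOfLe Subgroup.le_normalizer).toEquiv
  rw [Subgroup.relIndex, ← h1]
  exact Subgroup.index_mul_card (H.subgroupOf (Subgroup.normalizer (H : Set G)))

end ArtinAux2

section chi
variable {G : Type} [Group G] [Fintype G]

variable {G : Type} [Group G] [Fintype G]

lemma spec_char (V : FDRep ℂ G) (g : G) :
    ∃ (ι : Finset ℂ) (d : ℂ → ℕ), (∀ z ∈ ι, z ^ (orderOf g) = 1) ∧
      ∀ k : ℕ, V.character (g ^ k) = ∑ z ∈ ι, (d z : ℂ) * z ^ k := by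
  have hn : 0 < orderOf g := orderOf_pos g
  have hf : (V.ρ g) ^ (orderOf g) = 1 := by
    rw [← map_pow, pow_orderOf_eq_one, map_one]
  obtain ⟨ι, d, h1, h2⟩ := spec_end (V.ρ g) (orderOf g) hn hf
  refine ⟨ι, d, h1, fun k => ?_⟩
  rw [FDRep.character, map_pow]
  exact h2 k

lemma chi_int (χ : G → ℂ) (h1 : IsCharacter G χ) (h2 : IsRatValued χ) (g : G) :
    ∃ m : ℤ, χ g = (m : ℂ) := by
  obtain ⟨V, hV, -⟩ := h1
  obtain ⟨q, hq⟩ := h2 g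
  obtain ⟨ι, d, hroot, htr⟩ := spec_char V g
  have hval : χ g = ∑ z ∈ ι, (d z : ℂ) * z := by
    have := htr 1
    simpa [hV] using this
  have hint : IsIntegral ℤ (χ g) := by
    rw [hval]
    apply IsIntegral.sum
    intro z hz
    apply IsIntegral.mul
    · have : ((d z : ℂ)) = algebraMap ℤ ℂ (d z : ℤ) := by push_cast; ring
      rw [this]
      exact isIntegral_algebraMap
    · refine ⟨Polynomial.X ^ (orderOf g) - Polynomial.C 1, ?_, ?_⟩
      · exact Polynomial.monic_X_pow_sub_C 1 (orderOf_pos g).ne'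
      · simp [hroot z hz]
  rw [hq] at hint
  have : IsIntegral ℤ q := by
    rwa [show ((q : ℂ)) = algebraMap ℚ ℂ q from rfl,
      isIntegral_algebraMap_iff (algebraMap ℚ ℂ).injective] at hint
  obtain ⟨m, hm⟩ := IsIntegrallyClosed.isIntegral_iff.mp this
  exact ⟨m, by rw [hq, ← hm]; norm_cast⟩

lemma chi_eq_of_zpowers_eq (χ : G → ℂ) (h1 : IsCharacter G χ) (h2 : IsRatValued χ)
    {g h : G} (hz : Subgroup.zpowers g = Subgroup.zpowers h) : χ g = χ h := by
  obtain ⟨V, hV, -⟩ := h1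
  have hmem : h ∈ Subgroup.zpowers g := hz ▸ Subgroup.mem_zpowers h
  obtain ⟨m, hm'⟩ := hmem
  have hm : g ^ m = h := hm'
  set n := orderOf g with hn
  have hnpos : 0 < n := orderOf_pos g
  -- h = g ^ k with k : ℕ
  set k : ℕ := (m % (n : ℤ)).toNat with hk
  have hmk : g ^ k = h := by
    have h0 : (0:ℤ) ≤ m % (n:ℤ) := Int.emod_nonneg m (by exact_mod_cast hnpos.ne')
    have : g ^ ((m % (n:ℤ))) = g ^ m := by
      conv_rhs => rw [← Int.emod_add_mul_ediv m (n:ℤ)]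
      rw [zpow_add, zpow_mul, zpow_natCast, pow_orderOf_eq_one, one_zpow, mul_one]
    rw [← hm, ← this, ← zpow_natCast, Int.toNat_of_nonneg h0]
  have hord : orderOf h = n := by
    rw [← Nat.card_zpowers, ← hz, Nat.card_zpowers]
  have hcop : Nat.Coprime k n := by
    have h1 : orderOf (g ^ k) = n / Nat.gcd n k := orderOf_pow g
    rw [hmk, hord] at h1
    rcases Nat.div_eq_self.mp h1.symm with h | h
    · exact absurd h hnpos.ne'
    · exact (Nat.coprime_comm.mp h)
  obtain ⟨q, hq⟩ := h2 g
  obtain ⟨ι, d, hroot, htr⟩ := spec_char V g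
  have hval1 : ∑ z ∈ ι, (d z : ℂ) * z = (q : ℂ) := by
    have := htr 1
    simp only [pow_one] at this
    rw [← hq, hV]
    exact this.symm
  have := gal_sum ⟨n, hnpos⟩ k (by exact_mod_cast hcop) ι d (by exact_mod_cast hroot) q hval1
  rw [hV, ← hmk]
  rw [htr k, this, ← hV, hq]


lemma chi_eq_of_subconj (χ : G → ℂ) (h1 : IsCharacter G χ) (h2 : IsRatValued χ) {g h : G}
    (hc : SubConj (Subgroup.zpowers g) (Subgroup.zpowers h)) : χ g = χ h := by
  obtain ⟨y, hy⟩ := hc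
  rw [ArtinAux.zpowers_conj] at hy
  have h3 : χ g = χ (y * g * y⁻¹) := by
    obtain ⟨V, hV, -⟩ := h1
    rw [hV]
    exact (FDRep.char_conj V g y).symm
  rw [h3]
  exact chi_eq_of_zpowers_eq χ h1 h2 hy

end chi

namespace ArtinFinal

open ArtinAux ArtinAux2 Subgroup

attribute [local instance] Classical.propDecidable

variable {G : Type} [Group G] [Fintype G]


lemma isCyclic_zpowers (g : G) : IsCyclic (Subgroup.zpowers g) := by
  refine ⟨⟨⟨g, Subgroup.mem_zpowers g⟩, ?_⟩⟩
  rintro ⟨x, m, hm⟩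
  exact ⟨m, Subtype.ext (by simpa using hm)⟩

/-- predicate: chosen cyclic representative -/
def good (H : Subgroup G) : Prop := IsCyclic H ∧ crep H = H

lemma card_subgroup_le (H : Subgroup G) : Nat.card H ≤ Nat.card G := by
  have := Subgroup.card_le_of_le (le_top : H ≤ ⊤)
  rwa [Subgroup.card_top] at this

noncomputable def aCoef (zχ : G → ℤ) (H : Subgroup G) : ℤ :=
  if h : good H then
    zχ (genOf H) -
      ∑ K ∈ (Finset.univ.filter
          (fun K : Subgroup G => good K ∧ Nat.card H < Nat.card K)).attach,
        aCoef zχ K.1 * psi K.1 (genOf H)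
  else 0
termination_by Nat.card G - Nat.card H
decreasing_by
  have hK := K.2
  rw [Finset.mem_filter] at hK
  have h1 : Nat.card H < Nat.card K.1 := hK.2.2
  have h2 : Nat.card K.1 ≤ Nat.card G := card_subgroup_le K.1
  exact Nat.sub_lt_sub_left (lt_of_lt_of_le h1 h2) h1

lemma aCoef_good (zχ : G → ℤ) {H : Subgroup G} (h : good H) :
    aCoef zχ H = zχ (genOf H) -
      ∑ K ∈ Finset.univ.filter
          (fun K : Subgroup G => good K ∧ Nat.card H < Nat.card K),
        aCoef zχ K * psi K (genOf H) := by
  rw [aCoef, dif_pos h, Finset.sum_attach _ (fun K => aCoef zχ K * psi K (genOf H))]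

lemma aCoef_nongood (zχ : G → ℤ) {H : Subgroup G} (h : ¬ good H) : aCoef zχ H = 0 := by
  rw [aCoef, dif_neg h]

lemma key_gen (χ : G → ℂ) (h1 : IsCharacter G χ) (h2 : IsRatValued χ)
    (zχ : G → ℤ) (hzχ : ∀ g : G, χ g = (zχ g : ℂ))
    {H0 : Subgroup G} (hH0 : good H0) :
    χ (genOf H0) = ∑ K ∈ Finset.univ.filter (fun K : Subgroup G => good K),
      (aCoef zχ K : ℂ) * (psi K (genOf H0) : ℂ) := by
  set g0 := genOf H0 with hg0
  have hgen : Subgroup.zpowers g0 = H0 := zpowers_genOf hH0.1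
  have hH0mem : H0 ∈ Finset.univ.filter (fun K : Subgroup G => good K) := by
    simp [Finset.mem_filter, hH0]
  rw [← Finset.add_sum_erase _ _ hH0mem]
  have hpsi0 : psi H0 g0 = 1 := psi_diag hgen
  -- the big-card sum
  have hsum : ∑ K ∈ (Finset.univ.filter (fun K : Subgroup G => good K)).erase H0,
      (aCoef zχ K : ℂ) * (psi K g0 : ℂ)
      = ∑ K ∈ Finset.univ.filter
          (fun K : Subgroup G => good K ∧ Nat.card H0 < Nat.card K),
        (aCoef zχ K : ℂ) * (psi K g0 : ℂ) := by
    symm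
    apply Finset.sum_subset
    · intro K hK
      rw [Finset.mem_filter] at hK
      rw [Finset.mem_erase, Finset.mem_filter]
      refine ⟨?_, Finset.mem_univ K, hK.2.1⟩
      intro hEq
      rw [hEq] at hK
      exact lt_irrefl _ hK.2.2
    · intro K hK hnK
      rw [Finset.mem_erase, Finset.mem_filter] at hK
      rw [Finset.mem_filter] at hnK
      push_neg at hnK
      have hgood : good K := hK.2.2
      have hle0 : Nat.card K ≤ Nat.card H0 := hnK (Finset.mem_univ K) hgood
      have hpsi : psi K g0 = 0 := by
        by_contra hp
        have hcnt : cnt K g0 ≠ 0 := psi_ne_zero_imp hp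
        have hle : Nat.card (Subgroup.zpowers g0) ≤ Nat.card K := card_le_of_cnt_ne_zero hcnt
        rw [hgen] at hle
        have hcardeq : Nat.card (Subgroup.zpowers g0) = Nat.card K := by
          rw [hgen]
          exact le_antisymm hle hle0
        have hsc := subconj_of_cnt_ne_zero_card_eq hcnt hcardeq
        rw [hgen] at hsc
        have : crep H0 = crep K := crep_eq_of_subconj hsc
        rw [hH0.2, hgood.2] at this
        exact hK.1 this.symm
      rw [hpsi]
      simp
  rw [hsum, hpsi0]
  have heq := aCoef_good zχ hH0
  have : (aCoef zχ H0 : ℂ) = (zχ g0 : ℂ) -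
      ∑ K ∈ Finset.univ.filter
          (fun K : Subgroup G => good K ∧ Nat.card H0 < Nat.card K),
        (aCoef zχ K : ℂ) * (psi K g0 : ℂ) := by
    rw [heq]
    push_cast
    ring
  rw [hzχ g0]
  rw [this]
  push_cast
  ring

end ArtinFinal

section finalsec
open ArtinAux ArtinAux2 ArtinFinal

theorem stmt10 (G : Type) [Group G] [Fintype G] (χ : G → ℂ)
    (h1 : IsCharacter G χ) (h2 : IsRatValued χ) :
    ∃ a : Subgroup G → ℤ, ∀ g : G,
      χ g = ∑ᶠ H ∈ {H : Subgroup G | IsCyclic ↥H},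
        ((a H : ℂ) / (H.relIndex (Subgroup.normalizer (H : Set G)) : ℂ)) * indTriv G H g := by
  classical
  -- integer values of χ
  have hzχ := fun g : G => (chi_int χ h1 h2 g).choose_spec
  set zχ : G → ℤ := fun g => (chi_int χ h1 h2 g).choose with hzdef
  refine ⟨aCoef zχ, fun g => ?_⟩
  have hseteq : {H : Subgroup G | IsCyclic ↥H}
      = ↑(Finset.univ.filter (fun H : Subgroup G => IsCyclic ↥H)) := by
    ext H; simp
  rw [hseteq, finsum_mem_coe_finset]
  -- restrict the sum to good subgroups
  have hstep1 : ∑ H ∈ Finset.univ.filter (fun H : Subgroup G => IsCyclic ↥H),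
      ((aCoef zχ H : ℂ) / (H.relIndex (Subgroup.normalizer (H : Set G)) : ℂ)) * indTriv G H g
      = ∑ H ∈ Finset.univ.filter (fun H : Subgroup G => good H),
      ((aCoef zχ H : ℂ) / (H.relIndex (Subgroup.normalizer (H : Set G)) : ℂ)) * indTriv G H g := by
    symm
    apply Finset.sum_subset
    · intro H hH
      rw [Finset.mem_filter] at hH ⊢
      exact ⟨hH.1, hH.2.1⟩
    · intro H hH hnH
      rw [Finset.mem_filter] at hH hnH
      have : ¬ good H := fun hg => hnH ⟨hH.1, hg⟩
      rw [aCoef_nongood zχ this]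
      simp
  rw [hstep1]
  -- each good term equals aCoef * psi
  have hstep2 : ∀ H : Subgroup G,
      ((aCoef zχ H : ℂ) / (H.relIndex (Subgroup.normalizer (H : Set G)) : ℂ)) * indTriv G H g
      = (aCoef zχ H : ℂ) * (psi H g : ℂ) := by
    intro H
    have hr : ((H.relIndex (Subgroup.normalizer (H : Set G)) : ℂ)) * (Nat.card H : ℂ)
        = (Nat.card (Subgroup.normalizer (H : Set G)) : ℂ) := by
      exact_mod_cast relIndex_mul_card H
    have hcnt : ((cnt H g : ℕ) : ℂ) = (psi H g : ℂ) * (Nat.card (Subgroup.normalizer (H : Set G)) : ℂ) := by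
      exact_mod_cast cnt_eq_psi_mul H g
    have hNne : ((Nat.card (Subgroup.normalizer (H : Set G)) : ℕ) : ℂ) ≠ 0 := by
      have : Nat.card (Subgroup.normalizer (H : Set G)) ≠ 0 := Nat.card_pos.ne'
      exact_mod_cast this
    rw [indTriv]
    show (aCoef zχ H : ℂ) / _ * ((cnt H g : ℂ) / (Nat.card H : ℂ)) = _
    rw [div_mul_div_comm, hr, hcnt,
      show (aCoef zχ H : ℂ) * ((psi H g : ℂ) * (Nat.card (Subgroup.normalizer (H : Set G)) : ℂ))
        = ((aCoef zχ H : ℂ) * (psi H g : ℂ)) * (Nat.card (Subgroup.normalizer (H : Set G)) : ℂ) by ring,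
      mul_div_assoc, div_self hNne, mul_one]
  simp_rw [hstep2]
  -- reduce to the generator of the representative
  set H0 : Subgroup G := crep (Subgroup.zpowers g) with hH0def
  have hcycg : IsCyclic (Subgroup.zpowers g) := ArtinFinal.isCyclic_zpowers g
  have hgoodH0 : good H0 := by
    constructor
    · exact subconj_isCyclic (subconj_symm (crep_subconj _)) hcycg
    · exact crep_crep _
  set g0 : G := genOf H0 with hg0def
  have hgen : Subgroup.zpowers g0 = H0 := zpowers_genOf hgoodH0.1
  have hsc : SubConj (Subgroup.zpowers g) (Subgroup.zpowers g0) := by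
    rw [hgen]
    exact subconj_symm (crep_subconj _)
  have hχ : χ g = χ g0 := chi_eq_of_subconj χ h1 h2 hsc
  have hpsieq : ∀ H : Subgroup G, psi H g = psi H g0 := fun H => psi_subconj H hsc
  simp_rw [hpsieq]
  rw [hχ]
  exact key_gen χ h1 h2 zχ hzχ hgoodH0

end finalsec
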